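/- Let $a_n = \binom{2n}{n}$ and let $d_n^{(k)} = \det(a_{i+j+k-2})_{1 \le i,j \le n}$. Then $d_n^{(0)} = 2^{n-1}$, and for $k \ge 1$, $d_n^{(k)} = 2^n \prod_{1 \le i \le j \le k-1} \frac{i+j-1+2n}{i+j-1}$. -/

import Mathlib

open Finset

namespace S13

/-- central binomial coefficient as a rational -/
def A (m : ℕ) : ℚ := ((2*m).choose m : ℚ)

/-- the product appearing in the RHS -/
def P (n k : ℕ) : ℚ :=
  ∏ j ∈ Finset.Icc 1 (k - 1), ∏ i ∈ Finset.Icc 1 j,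
    ((i : ℚ) + j - 1 + 2 * n) / ((i : ℚ) + j - 1)

def Q (n k : ℕ) : ℚ :=
  ∏ i ∈ Finset.Icc 1 k, ((i : ℚ) + k - 1 + 2 * n) / ((i : ℚ) + k - 1)

def R (n k : ℕ) : ℚ :=
  ((2*n+2*k-1).factorial * (2*n).factorial : ℚ) /
    ((2*n+k).factorial * (2*n+k-1).factorial)

lemma prodIcc (c k : ℕ) :
    ∏ i ∈ Finset.Icc 1 k, ((i : ℚ) + c) = (c + k).factorial / c.factorial := by
  induction k with
  | zero =>
      simp [div_self (show ((c.factorial:ℚ)) ≠ 0 from by exact_mod_cast Nat.factorial_ne_zero c)]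
  | succ k ih =>
      rw [Finset.prod_Icc_succ_top (by omega), ih]
      have h : (c + (k+1)).factorial = (c + k + 1) * (c + k).factorial := by
        rw [show c + (k+1) = (c+k) + 1 by ring, Nat.factorial_succ]
      rw [h]
      have h2 : (c.factorial : ℚ) ≠ 0 := by
        exact_mod_cast Nat.factorial_ne_zero c
      field_simp
      push_cast
      ring

lemma Pone (n : ℕ) : P n 1 = 1 := by simp [P]

lemma Pzero (n : ℕ) : P n 0 = 1 := by simp [P]

lemma Qzero (n : ℕ) : Q n 0 = 1 := by simp [Q]

lemma Psucc (n k : ℕ) : P n (k+1) = P n k * Q n k := by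
  cases k with
  | zero => simp [P, Q]
  | succ k =>
      unfold P Q
      rw [show (k+1+1) - 1 = (k) + 1 by omega, show (k+1) - 1 = k by omega,
        Finset.prod_Icc_succ_top (by omega)]

lemma Qclosed (n k : ℕ) :
    Q n (k+1) = ((2*n+2*k+1).factorial * k.factorial : ℚ) /
      ((2*n+k).factorial * (2*k+1).factorial) := by
  unfold Q
  rw [Finset.prod_div_distrib]
  have h1 : ∏ i ∈ Finset.Icc 1 (k+1), ((i : ℚ) + ((k+1:ℕ):ℚ) - 1 + 2 * n)
      = ∏ i ∈ Finset.Icc 1 (k+1), ((i : ℚ) + ((k + 2*n : ℕ) : ℚ)) := by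
    apply Finset.prod_congr rfl; intro i _; push_cast; ring
  have h2 : ∏ i ∈ Finset.Icc 1 (k+1), ((i : ℚ) + ((k+1:ℕ):ℚ) - 1)
      = ∏ i ∈ Finset.Icc 1 (k+1), ((i : ℚ) + ((k : ℕ) : ℚ)) := by
    apply Finset.prod_congr rfl; intro i _; push_cast; ring
  rw [h1, h2, prodIcc, prodIcc,
    show k + 2*n + (k+1) = 2*n+2*k+1 by ring, show k + (k+1) = 2*k+1 by ring]
  have f1 : ((k + 2*n).factorial : ℚ) ≠ 0 := by exact_mod_cast Nat.factorial_ne_zero _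
  have f2 : ((k).factorial : ℚ) ≠ 0 := by exact_mod_cast Nat.factorial_ne_zero _
  have f3 : ((2*k+1).factorial : ℚ) ≠ 0 := by exact_mod_cast Nat.factorial_ne_zero _
  have f4 : ((2*n+k).factorial : ℚ) ≠ 0 := by exact_mod_cast Nat.factorial_ne_zero _
  rw [show k + 2*n = 2*n + k by ring]
  field_simp

lemma Rzero (n : ℕ) : R n 0 = 1 := by
  unfold R
  rw [show 2*n+2*0-1 = 2*n-1 by omega, show 2*n+0 = 2*n by omega, mul_comm]
  exact div_self (by positivity)

lemma Rclosed (n k : ℕ) :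
    R n (k+1) = ((2*n+2*k+1).factorial * (2*n).factorial : ℚ) /
      ((2*n+k+1).factorial * (2*n+k).factorial) := by
  unfold R
  rw [show 2*n+2*(k+1)-1 = 2*n+2*k+1 by omega, show 2*n+(k+1)-1 = 2*n+k by omega,
    show 2*n+(k+1) = 2*n+k+1 by omega]

lemma Qpos (n k : ℕ) : 0 < Q n (k+1) := by
  rw [Qclosed]
  positivity

lemma Rpos (n k : ℕ) : 0 < R n k := by
  unfold R
  positivity

lemma Ppos (n k : ℕ) : 0 < P n k := by
  induction k with
  | zero => rw [Pzero]; norm_num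
  | succ k ih =>
      rw [Psucc]
      rcases k with _ | k
      · rw [Qzero]; simpa using ih
      · exact mul_pos ih (Qpos n k)

/-- bridge for the induction on k in `PsuccN` -/
lemma bridge (n k : ℕ) : R n k * Q (n+1) k = Q n k * R n (k+1) := by
  cases k with
  | zero =>
      rw [Qzero, Qzero, Rzero]
      rw [Rclosed]
      have f1 : ((2*n+1).factorial : ℚ) ≠ 0 := by exact_mod_cast Nat.factorial_ne_zero _
      have f2 : ((2*n).factorial : ℚ) ≠ 0 := by exact_mod_cast Nat.factorial_ne_zero _
      rw [show 2*n+2*0+1 = 2*n+1 by omega, show 2*n+0+1 = 2*n+1 by omega,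
        show 2*n+0 = 2*n by omega]
      field_simp
  | succ k =>
      rw [Rclosed, Rclosed, Qclosed, Qclosed,
        show 2*(n+1)+2*k+1 = 2*n+2*k+3 by ring, show 2*(n+1)+k = 2*n+k+2 by ring,
        show 2*n+2*(k+1)+1 = 2*n+2*k+3 by ring, show 2*n+(k+1)+1 = 2*n+k+2 by ring,
        show 2*n+(k+1) = 2*n+k+1 by ring]
      ring

lemma PsuccN (n : ℕ) : ∀ k, P (n+1) k = P n k * R n k := by
  intro k
  induction k with
  | zero => rw [Pzero, Pzero, Rzero]; ring
  | succ k ih =>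
      rw [Psucc, Psucc, ih]
      calc P n k * R n k * Q (n+1) k = P n k * (R n k * Q (n+1) k) := by ring
        _ = P n k * (Q n k * R n (k+1)) := by rw [bridge]
        _ = P n k * Q n k * R n (k+1) := by ring


lemma fact_step (a : ℕ) : ((a+1).factorial : ℚ) = (a+1) * a.factorial := by
  rw [Nat.factorial_succ]; push_cast; ring

lemma Ptwo (n : ℕ) : P n 2 = 2*(n:ℚ)+1 := by
  have h := Psucc n 1
  rw [Pone] at h
  rw [h, Qclosed n 0]
  rw [show 2*n+2*0+1 = (2*n)+1 by ring, show 2*n+0 = 2*n by ring, fact_step (2*n)]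
  have f2 : ((2*n).factorial : ℚ) ≠ 0 := by exact_mod_cast Nat.factorial_ne_zero _
  field_simp
  rw [show 2*0+1 = 1 from rfl, Nat.factorial_zero, Nat.factorial_one]; push_cast; ring

lemma DJcore (n k' : ℕ) :
    R (n+1) (k'+1) * (Q n (k'+1) * Q n (k'+2)) =
      R n (k'+1) * (Q (n+1) (k'+1) * Q (n+1) (k'+2) - Q (n+1) (k'+1)^2) := by
  have ra : R (n+1) (k'+1) = ((2*n+2*k'+3).factorial * (2*n+2).factorial : ℚ) /
      ((2*n+k'+3).factorial * (2*n+k'+2).factorial) := by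
    rw [Rclosed, show 2*(n+1)+2*k'+1 = 2*n+2*k'+3 by ring,
      show 2*(n+1)+k'+1 = 2*n+k'+3 by ring, show 2*(n+1)+k' = 2*n+k'+2 by ring,
      show 2*(n+1) = 2*n+2 by ring]
  have rb : R n (k'+1) = ((2*n+2*k'+1).factorial * (2*n).factorial : ℚ) /
      ((2*n+k'+1).factorial * (2*n+k').factorial) := Rclosed n k'
  have qa : Q n (k'+1) = ((2*n+2*k'+1).factorial * k'.factorial : ℚ) /
      ((2*n+k').factorial * (2*k'+1).factorial) := Qclosed n k'
  have qb : Q n (k'+2) = ((2*n+2*k'+3).factorial * (k'+1).factorial : ℚ) /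
      ((2*n+k'+1).factorial * (2*k'+3).factorial) := by
    rw [show k'+2 = (k'+1)+1 by ring, Qclosed, show 2*n+2*(k'+1)+1 = 2*n+2*k'+3 by ring,
      show 2*n+(k'+1) = 2*n+k'+1 by ring, show 2*(k'+1)+1 = 2*k'+3 by ring]
  have qc : Q (n+1) (k'+1) = ((2*n+2*k'+3).factorial * k'.factorial : ℚ) /
      ((2*n+k'+2).factorial * (2*k'+1).factorial) := by
    rw [Qclosed, show 2*(n+1)+2*k'+1 = 2*n+2*k'+3 by ring,
      show 2*(n+1)+k' = 2*n+k'+2 by ring]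
  have qd : Q (n+1) (k'+2) = ((2*n+2*k'+5).factorial * (k'+1).factorial : ℚ) /
      ((2*n+k'+3).factorial * (2*k'+3).factorial) := by
    rw [show k'+2 = (k'+1)+1 by ring, Qclosed,
      show 2*(n+1)+2*(k'+1)+1 = 2*n+2*k'+5 by ring,
      show 2*(n+1)+(k'+1) = 2*n+k'+3 by ring, show 2*(k'+1)+1 = 2*k'+3 by ring]
  rw [ra, rb, qa, qb, qc, qd]
  rw [show ((2*n+2*k'+5).factorial : ℚ)
        = (2*n+2*k'+5)*((2*n+2*k'+4)*((2*n+2*k'+3)*((2*n+2*k'+2)*(2*n+2*k'+1).factorial))) by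
      rw [show 2*n+2*k'+5 = (2*n+2*k'+4)+1 by ring, fact_step,
        show 2*n+2*k'+4 = (2*n+2*k'+3)+1 by ring, fact_step,
        show 2*n+2*k'+3 = (2*n+2*k'+2)+1 by ring, fact_step,
        show 2*n+2*k'+2 = (2*n+2*k'+1)+1 by ring, fact_step]
      push_cast; ring,
    show ((2*n+2*k'+3).factorial : ℚ)
        = (2*n+2*k'+3)*((2*n+2*k'+2)*(2*n+2*k'+1).factorial) by
      rw [show 2*n+2*k'+3 = (2*n+2*k'+2)+1 by ring, fact_step,
        show 2*n+2*k'+2 = (2*n+2*k'+1)+1 by ring, fact_step]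
      push_cast; ring,
    show ((2*n+k'+3).factorial : ℚ)
        = (2*n+k'+3)*((2*n+k'+2)*((2*n+k'+1)*(2*n+k').factorial)) by
      rw [show 2*n+k'+3 = (2*n+k'+2)+1 by ring, fact_step,
        show 2*n+k'+2 = (2*n+k'+1)+1 by ring, fact_step,
        show 2*n+k'+1 = (2*n+k')+1 by ring, fact_step]
      push_cast; ring,
    show ((2*n+k'+2).factorial : ℚ)
        = (2*n+k'+2)*((2*n+k'+1)*(2*n+k').factorial) by
      rw [show 2*n+k'+2 = (2*n+k'+1)+1 by ring, fact_step,
        show 2*n+k'+1 = (2*n+k')+1 by ring, fact_step]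
      push_cast; ring,
    show ((2*n+k'+1).factorial : ℚ) = (2*n+k'+1)*(2*n+k').factorial by
      rw [show 2*n+k'+1 = (2*n+k')+1 by ring, fact_step]; push_cast; ring,
    show ((2*n+2).factorial : ℚ) = (2*n+2)*((2*n+1)*(2*n).factorial) by
      rw [show 2*n+2 = (2*n+1)+1 by ring, fact_step,
        show 2*n+1 = (2*n)+1 by ring, fact_step]
      push_cast; ring,
    show (((k'+1)).factorial : ℚ) = (k'+1)*(k').factorial by
      rw [fact_step],
    show ((2*k'+3).factorial : ℚ) = (2*k'+3)*((2*k'+2)*(2*k'+1).factorial) by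
      rw [show 2*k'+3 = (2*k'+2)+1 by ring, fact_step,
        show 2*k'+2 = (2*k'+1)+1 by ring, fact_step]
      push_cast; ring]
  have f1 : ((2*n+2*k'+1).factorial : ℚ) ≠ 0 := by exact_mod_cast Nat.factorial_ne_zero _
  have f2 : ((2*n+k').factorial : ℚ) ≠ 0 := by exact_mod_cast Nat.factorial_ne_zero _
  have f3 : ((2*n).factorial : ℚ) ≠ 0 := by exact_mod_cast Nat.factorial_ne_zero _
  have f4 : ((k').factorial : ℚ) ≠ 0 := by exact_mod_cast Nat.factorial_ne_zero _
  have f5 : ((2*k'+1).factorial : ℚ) ≠ 0 := by exact_mod_cast Nat.factorial_ne_zero _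
  have g1 : ((2*n+2*k'+2 : ℕ) : ℚ) ≠ 0 := by positivity
  have g2 : ((2*n+k'+1 : ℕ) : ℚ) ≠ 0 := by positivity
  have g3 : ((2*n+k'+2 : ℕ) : ℚ) ≠ 0 := by positivity
  have g4 : ((2*n+k'+3 : ℕ) : ℚ) ≠ 0 := by positivity
  field_simp
  ring

lemma DJP (n k : ℕ) (hk : 1 ≤ k) :
    P (n+2) k * P n (k+2) = P (n+1) k * P (n+1) (k+2) - P (n+1) (k+1)^2 := by
  obtain ⟨k', rfl⟩ : ∃ k', k = k'+1 := ⟨k-1, by omega⟩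
  have h1 : P (n+2) (k'+1) = P n (k'+1) * R n (k'+1) * R (n+1) (k'+1) := by
    rw [show n+2 = (n+1)+1 by ring, PsuccN, PsuccN]
  have h2 : P n (k'+3) = P n (k'+1) * Q n (k'+1) * Q n (k'+2) := by
    rw [show k'+3 = (k'+2)+1 by ring, Psucc, show k'+2 = (k'+1)+1 by ring, Psucc]
  have h3 : P (n+1) (k'+1) = P n (k'+1) * R n (k'+1) := PsuccN n _
  have h4 : P (n+1) (k'+3) = P n (k'+1) * R n (k'+1) * (Q (n+1) (k'+1) * Q (n+1) (k'+2)) := by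
    rw [show k'+3 = (k'+2)+1 by ring, Psucc, show k'+2 = (k'+1)+1 by ring, Psucc, h3]
    ring
  have h5 : P (n+1) (k'+2) = P n (k'+1) * R n (k'+1) * Q (n+1) (k'+1) := by
    rw [show k'+2 = (k'+1)+1 by ring, Psucc, h3]
  rw [show k'+1+2 = k'+3 by ring, show k'+1+1 = k'+2 by ring, h1, h2, h3, h4, h5]
  linear_combination (P n (k'+1))^2 * R n (k'+1) * DJcore n k'


lemma A_eq_central (m : ℕ) : A m = (Nat.centralBinom m : ℚ) := rfl

lemma Astep (k' : ℕ) : A (k'+2) = A (k'+1) * Q 1 (k'+1) := by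
  have hc : ((k'+2 : ℕ) : ℚ) * A (k'+2) = 2*(2*(k'+1)+1) * A (k'+1) := by
    rw [A_eq_central, A_eq_central]
    exact_mod_cast Nat.succ_mul_centralBinom_succ (k'+1)
  have hq : Q 1 (k'+1) = ((2*k'+3).factorial * k'.factorial : ℚ) /
      ((k'+2).factorial * (2*k'+1).factorial) := by
    rw [Qclosed, show 2*1+2*k'+1 = 2*k'+3 by ring, show 2*1+k' = k'+2 by ring]
  have e1 : ((2*k'+3).factorial : ℚ) = (2*k'+3)*((2*k'+2)*(2*k'+1).factorial) := by
    rw [show 2*k'+3 = (2*k'+2)+1 by ring, fact_step,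
      show 2*k'+2 = (2*k'+1)+1 by ring, fact_step]
    push_cast; ring
  have e2 : ((k'+2).factorial : ℚ) = (k'+2)*((k'+1)*k'.factorial) := by
    rw [show k'+2 = (k'+1)+1 by ring, fact_step, fact_step]
    push_cast; ring
  have f4 : ((k').factorial : ℚ) ≠ 0 := by exact_mod_cast Nat.factorial_ne_zero _
  have f5 : ((2*k'+1).factorial : ℚ) ≠ 0 := by exact_mod_cast Nat.factorial_ne_zero _
  have g2 : ((k':ℚ)+2) ≠ 0 := by positivity
  have hc2 : A (k'+2) = 2*(2*(k'+1)+1) * A (k'+1) / ((k' : ℚ)+2) := by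
    rw [← hc]; push_cast; field_simp
  rw [hc2, hq, e1, e2]
  field_simp
  ring

lemma Abase : ∀ k, 1 ≤ k → A k = 2 * P 1 k := by
  intro k hk
  induction k, hk using Nat.le_induction with
  | base =>
      rw [Pone]
      unfold A
      norm_num
  | succ k hk ih =>
      obtain ⟨k', rfl⟩ : ∃ k', k = k'+1 := ⟨k-1, by omega⟩
      rw [Psucc, show k'+1+1 = k'+2 by ring, Astep, ih]
      ring


/-! ### Matrix part -/

open Matrix

def H (k N : ℕ) : Matrix (Fin N) (Fin N) ℚ :=
  Matrix.of fun i j => A ((i : ℕ) + (j : ℕ) + k)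

def e0 (m : ℕ) : Fin m ⊕ Fin 1 ≃ Fin (m+1) where
  toFun x := match x with
    | .inl i => ⟨(i : ℕ) + 1, by omega⟩
    | .inr _ => ⟨0, by omega⟩
  invFun y := if h : (y : ℕ) = 0 then .inr 0 else .inl ⟨(y : ℕ) - 1, by
    have := y.isLt; omega⟩
  left_inv := by
    rintro (i | r)
    · show (if h : ((⟨(i:ℕ)+1, by omega⟩ : Fin (m+1)) : ℕ) = 0 then _ else _) = _
      rw [dif_neg (by simp)]
      simp
    · show (if h : ((⟨0, by omega⟩ : Fin (m+1)) : ℕ) = 0 then _ else _) = _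
      rw [dif_pos rfl]
      simp [Fin.eq_zero r]
  right_inv := by
    intro y
    by_cases h : (y : ℕ) = 0
    · simp only [dif_pos h]
      show ⟨0, _⟩ = y
      exact Fin.ext h.symm
    · simp only [dif_neg h]
      have := y.isLt
      show Fin.mk _ _ = y
      apply Fin.ext
      simp
      omega

def e1 (m : ℕ) : Fin m ⊕ Fin 1 ≃ Fin (m+1) where
  toFun x := match x with
    | .inl i => ⟨(i : ℕ), by omega⟩
    | .inr _ => ⟨m, by omega⟩
  invFun y := if h : (y : ℕ) = m then .inr 0 else .inl ⟨(y : ℕ), by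
    have := y.isLt; omega⟩
  left_inv := by
    rintro (i | r)
    · show (if h : ((⟨(i:ℕ), by omega⟩ : Fin (m+1)) : ℕ) = m then _ else _) = _
      rw [dif_neg (by have := i.isLt; simp; omega)]
    · show (if h : ((⟨m, by omega⟩ : Fin (m+1)) : ℕ) = m then _ else _) = _
      rw [dif_pos rfl]
      simp [Fin.eq_zero r]
  right_inv := by
    intro y
    by_cases h : (y : ℕ) = m
    · simp only [dif_pos h]
      exact Fin.ext h.symm
    · simp only [dif_neg h]

def e2 (m : ℕ) : Fin m ⊕ Fin 2 ≃ Fin (m+2) where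
  toFun x := match x with
    | .inl i => ⟨(i : ℕ) + 1, by omega⟩
    | .inr ⟨0, _⟩ => ⟨0, by omega⟩
    | .inr ⟨_+1, _⟩ => ⟨m + 1, by omega⟩
  invFun y := if h0 : (y : ℕ) = 0 then .inr 0 else if h1 : (y : ℕ) = m + 1 then .inr 1 else
    .inl ⟨(y : ℕ) - 1, by have := y.isLt; omega⟩
  left_inv := by
    rintro (i | ⟨(_ | r), hr⟩)
    · have hi := i.isLt
      show (if h0 : ((⟨(i:ℕ)+1, by omega⟩ : Fin (m+2)) : ℕ) = 0 then _ else _) = _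
      rw [dif_neg (by simp), dif_neg (by simp; omega)]
      simp
    · show (if h0 : ((⟨0, by omega⟩ : Fin (m+2)) : ℕ) = 0 then _ else _) = _
      rw [dif_pos rfl]
      rfl
    · show (if h0 : ((⟨m+1, by omega⟩ : Fin (m+2)) : ℕ) = 0 then _ else _) = _
      rw [dif_neg (by simp), dif_pos rfl]
      have : r = 0 := by omega
      subst this
      rfl
  right_inv := by
    intro y
    have hy := y.isLt
    by_cases h0 : (y : ℕ) = 0
    · simp only [dif_pos h0]
      exact Fin.ext h0.symm
    · simp only [dif_neg h0]
      by_cases h1 : (y : ℕ) = m + 1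
      · simp only [dif_pos h1]
        exact Fin.ext h1.symm
      · simp only [dif_neg h1]
        apply Fin.ext
        simp
        omega

def bv (m : ℕ) (r : Fin 2) : ℕ := match r with
  | ⟨0, _⟩ => 0
  | ⟨_+1, _⟩ => m + 1

lemma bv_zero (m : ℕ) : bv m 0 = 0 := rfl
lemma bv_one (m : ℕ) : bv m 1 = m + 1 := rfl

def Bm (k m : ℕ) : Matrix (Fin m) (Fin 2) ℚ :=
  Matrix.of fun i r => A ((i : ℕ) + 1 + bv m r + k)

def Cm (k m : ℕ) : Matrix (Fin 2) (Fin m) ℚ :=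
  Matrix.of fun r i => A ((i : ℕ) + 1 + bv m r + k)

def Dm (k m : ℕ) : Matrix (Fin 2) (Fin 2) ℚ :=
  Matrix.of fun r s => A (bv m r + bv m s + k)

lemma lem2 (k m : ℕ) : (H k (m+2)).submatrix (e2 m) (e2 m)
    = Matrix.fromBlocks (H (k+2) m) (Bm k m) (Cm k m) (Dm k m) := by
  ext x y
  rcases x with i | ⟨(_ | r), hr⟩ <;> rcases y with j | ⟨(_ | s), hs⟩ <;>
    simp only [Matrix.submatrix_apply, Matrix.fromBlocks_apply₁₁,
      Matrix.fromBlocks_apply₁₂, Matrix.fromBlocks_apply₂₁, Matrix.fromBlocks_apply₂₂,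
      H, Bm, Cm, Dm, bv, e2, Equiv.coe_fn_mk, Matrix.of_apply] <;>
    (try interval_cases r) <;> (try interval_cases s) <;>
    (first | rfl | (congr 1; omega))

lemma lemA (k m : ℕ) : (H k (m+1)).submatrix (e0 m) (e0 m)
    = Matrix.fromBlocks (H (k+2) m)
      (Matrix.of fun i (_ : Fin 1) => Bm k m i 0)
      (Matrix.of fun (_ : Fin 1) j => Cm k m 0 j)
      (Matrix.of fun (_ : Fin 1) (_ : Fin 1) => Dm k m 0 0) := by
  ext x y
  rcases x with i | r <;> rcases y with j | s <;>
    simp only [Matrix.submatrix_apply, Matrix.fromBlocks_apply₁₁,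
      Matrix.fromBlocks_apply₁₂, Matrix.fromBlocks_apply₂₁, Matrix.fromBlocks_apply₂₂,
      H, Bm, Cm, Dm, bv_zero, bv, e0, Equiv.coe_fn_mk, Matrix.of_apply] <;>
    (first | rfl | (congr 1; omega))

lemma lemB (k m : ℕ) : (H (k+2) (m+1)).submatrix (e1 m) (e1 m)
    = Matrix.fromBlocks (H (k+2) m)
      (Matrix.of fun i (_ : Fin 1) => Bm k m i 1)
      (Matrix.of fun (_ : Fin 1) j => Cm k m 1 j)
      (Matrix.of fun (_ : Fin 1) (_ : Fin 1) => Dm k m 1 1) := by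
  ext x y
  rcases x with i | r <;> rcases y with j | s <;>
    simp only [Matrix.submatrix_apply, Matrix.fromBlocks_apply₁₁,
      Matrix.fromBlocks_apply₁₂, Matrix.fromBlocks_apply₂₁, Matrix.fromBlocks_apply₂₂,
      H, Bm, Cm, Dm, bv_one, bv, e1, Equiv.coe_fn_mk, Matrix.of_apply] <;>
    (first | rfl | (congr 1; omega))

lemma lemC (k m : ℕ) : (H (k+1) (m+1)).submatrix (e0 m) (e1 m)
    = Matrix.fromBlocks (H (k+2) m)
      (Matrix.of fun i (_ : Fin 1) => Bm k m i 1)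
      (Matrix.of fun (_ : Fin 1) j => Cm k m 0 j)
      (Matrix.of fun (_ : Fin 1) (_ : Fin 1) => Dm k m 0 1) := by
  ext x y
  rcases x with i | r <;> rcases y with j | s <;>
    simp only [Matrix.submatrix_apply, Matrix.fromBlocks_apply₁₁,
      Matrix.fromBlocks_apply₁₂, Matrix.fromBlocks_apply₂₁, Matrix.fromBlocks_apply₂₂,
      H, Bm, Cm, Dm, bv_zero, bv_one, bv, e0, e1, Equiv.coe_fn_mk, Matrix.of_apply] <;>
    (first | rfl | (congr 1; omega))


lemma DJ (m k : ℕ) [Invertible (H (k+2) m)] :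
    (H k (m+2)).det * (H (k+2) m).det
      = (H k (m+1)).det * (H (k+2) (m+1)).det - (H (k+1) (m+1)).det ^ 2 := by
  set E := H (k+2) m with hEdef
  set S : Matrix (Fin 2) (Fin 2) ℚ := Dm k m - Cm k m * ⅟E * Bm k m with hSdef
  have hBC : (Cm k m)ᵀ = Bm k m := by
    ext i r; rfl
  have hCB : (Bm k m)ᵀ = Cm k m := by
    rw [← hBC, Matrix.transpose_transpose]
  have hE : Eᵀ = E := by
    ext i j
    show A _ = A _
    congr 1
    omega
  have hiE : (⅟E)ᵀ = ⅟E := by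
    rw [Matrix.invOf_eq_nonsing_inv, Matrix.transpose_nonsing_inv, hE]
  have hD : (Dm k m)ᵀ = Dm k m := by
    ext r t
    show A _ = A _
    congr 1
    omega
  have hM : (Cm k m * ⅟E * Bm k m)ᵀ = Cm k m * ⅟E * Bm k m := by
    rw [Matrix.transpose_mul, Matrix.transpose_mul, hBC, hiE, hCB, ← Matrix.mul_assoc]
  have hSsym : Sᵀ = S := by
    rw [hSdef, Matrix.transpose_sub, hD, hM]
  have hS01 : S 1 0 = S 0 1 := by
    conv_rhs => rw [← hSsym]
    rfl
  have h2 : (H k (m+2)).det = E.det * (S 0 0 * S 1 1 - S 0 1 * S 1 0) := by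
    rw [← Matrix.det_submatrix_equiv_self (e2 m), lem2, Matrix.det_fromBlocks₁₁,
      Matrix.det_fin_two]
  have entry00 : ∀ r t : Fin 2,
      ((Matrix.of fun (_ : Fin 1) (_ : Fin 1) => Dm k m r t)
        - (Matrix.of fun (_ : Fin 1) j => Cm k m r j) * ⅟E
          * (Matrix.of fun i (_ : Fin 1) => Bm k m i t)) 0 0 = S r t := by
    intro r t
    simp [hSdef, Matrix.mul_apply, Matrix.sub_apply]
  have hA : (H k (m+1)).det = E.det * S 0 0 := by
    rw [← Matrix.det_submatrix_equiv_self (e0 m), lemA, Matrix.det_fromBlocks₁₁,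
      Matrix.det_fin_one, entry00]
  have hB : (H (k+2) (m+1)).det = E.det * S 1 1 := by
    rw [← Matrix.det_submatrix_equiv_self (e1 m), lemB, Matrix.det_fromBlocks₁₁,
      Matrix.det_fin_one, entry00]
  have hC : (H (k+1) (m+1)).det ^ 2 = (E.det * S 0 1) ^ 2 := by
    set σ : Equiv.Perm (Fin m ⊕ Fin 1) := (e0 m).trans (e1 m).symm with hσ
    have hresub : (H (k+1) (m+1)).submatrix (e0 m) (e1 m)
        = ((H (k+1) (m+1)).submatrix (e1 m) (e1 m)).submatrix σ id := by
      ext x y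
      simp [Matrix.submatrix_apply, hσ, Equiv.apply_symm_apply]
    have hd : ((H (k+1) (m+1)).submatrix (e0 m) (e1 m)).det = E.det * S 0 1 := by
      rw [lemC, Matrix.det_fromBlocks₁₁, Matrix.det_fin_one, entry00]
    rw [hresub, Matrix.det_permute, Matrix.det_submatrix_equiv_self] at hd
    rcases Int.units_eq_one_or σ.sign with h | h <;> rw [h] at hd
    · simp only [Units.val_one, Int.cast_one, one_mul] at hd
      rw [hd]
    · simp only [Units.val_neg, Units.val_one, Int.cast_neg, Int.cast_one, neg_one_mul] at hd
      rw [← neg_eq_iff_eq_neg.2 hd.symm]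
      ring
  rw [h2, hA, hB, hC, hS01]
  ring


lemma P0k (k : ℕ) : P 0 k = 1 := by
  unfold P
  apply Finset.prod_eq_one
  intro j hj
  apply Finset.prod_eq_one
  intro i hi
  have hj : 1 ≤ j := (Finset.mem_Icc.1 hj).1
  have hi : 1 ≤ i := (Finset.mem_Icc.1 hi).1
  have h1 : (1:ℚ) ≤ (i:ℚ) := by exact_mod_cast hi
  have h2 : (1:ℚ) ≤ (j:ℚ) := by exact_mod_cast hj
  have hne : ((i:ℚ) + j - 1) ≠ 0 := by linarith
  rw [show ((i:ℚ) + j - 1 + 2 * ((0:ℕ):ℚ)) = ((i:ℚ) + j - 1) by push_cast; ring]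
  exact div_self hne

lemma A0 : A 0 = 1 := by norm_num [A]

lemma main : ∀ n : ℕ, ((H 0 n).det = (2:ℚ)^(n-1)) ∧
    (∀ k, 1 ≤ k → (H k n).det = 2^n * P n k) := by
  intro n
  induction n using Nat.strong_induction_on with
  | _ n ih =>
    match n with
    | 0 =>
        constructor
        · rw [Matrix.det_isEmpty]
          norm_num
        · intro k _
          rw [Matrix.det_isEmpty, P0k]
          norm_num
    | 1 =>
        constructor
        · rw [Matrix.det_fin_one]
          show A (0+0+0) = _
          rw [show (0+0+0 : ℕ) = 0 by ring, A0]
          norm_num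
        · intro k hk
          rw [Matrix.det_fin_one]
          show A (0+0+k) = _
          rw [show (0+0+k : ℕ) = k by ring, Abase k hk, pow_one]
    | (m+2) =>
        have ihm := ih m (by omega)
        have ihm1 := ih (m+1) (by omega)
        constructor
        · have hdet2 : (H 2 m).det = 2^m * (2*(m:ℚ)+1) := by
            rw [ihm.2 2 (by omega), Ptwo]
          have hne : (H 2 m).det ≠ 0 := by rw [hdet2]; positivity
          haveI := Matrix.invertibleOfIsUnitDet (H 2 m) (isUnit_iff_ne_zero.2 hne)
          have dj := DJ m 0
          rw [ihm1.1, ihm1.2 1 (by omega), ihm1.2 2 (by omega), hdet2, Pone, Ptwo,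
            show (m+1) - 1 = m from rfl] at dj
          have hc : (2:ℚ)^m * (2*(m:ℚ)+1) ≠ 0 := by positivity
          have key : (H 0 (m+2)).det * ((2:ℚ)^m * (2*(m:ℚ)+1))
              = (2:ℚ)^(m+1) * ((2:ℚ)^m * (2*(m:ℚ)+1)) := by
            rw [dj]
            push_cast
            ring
          have hfin := mul_right_cancel₀ hc key
          rw [show (m+2) - 1 = m+1 from rfl]
          exact hfin
        · intro k hk
          have hne : (H (k+2) m).det ≠ 0 := by
            rw [ihm.2 (k+2) (by omega)]
            have := Ppos m (k+2)
            positivity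
          haveI := Matrix.invertibleOfIsUnitDet (H (k+2) m) (isUnit_iff_ne_zero.2 hne)
          have dj := DJ m k
          rw [ihm.2 (k+2) (by omega), ihm1.2 k hk, ihm1.2 (k+2) (by omega),
            ihm1.2 (k+1) (by omega)] at dj
          have hdjp := DJP m k hk
          have hc : (2:ℚ)^m * P m (k+2) ≠ 0 := by
            have := Ppos m (k+2)
            positivity
          have key : (H k (m+2)).det * ((2:ℚ)^m * P m (k+2))
              = 2^(m+2) * P (m+2) k * ((2:ℚ)^m * P m (k+2)) := by
            rw [dj]
            linear_combination (-(2:ℚ)^(2*m+2)) * hdjp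
          exact mul_right_cancel₀ hc key

end S13

theorem stmt13 (n : ℕ) :
    (Matrix.of fun i j : Fin n =>
        ((2 * ((i : ℕ) + (j : ℕ))).choose ((i : ℕ) + (j : ℕ)) : ℚ)).det = 2 ^ (n - 1) ∧
    ∀ k : ℕ, 1 ≤ k →
      (Matrix.of fun i j : Fin n =>
          ((2 * ((i : ℕ) + (j : ℕ) + k)).choose ((i : ℕ) + (j : ℕ) + k) : ℚ)).det =
        2 ^ n * ∏ j ∈ Finset.Icc 1 (k - 1), ∏ i ∈ Finset.Icc 1 j,
          ((i : ℚ) + j - 1 + 2 * n) / ((i : ℚ) + j - 1) := by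
  constructor
  · have h := (S13.main n).1
    have he : (Matrix.of fun i j : Fin n =>
        ((2 * ((i : ℕ) + (j : ℕ))).choose ((i : ℕ) + (j : ℕ)) : ℚ)) = S13.H 0 n := by
      ext i j
      show _ = S13.A ((i:ℕ) + (j:ℕ) + 0)
      rw [S13.A]
      norm_num
    rw [he, h]
  · intro k hk
    have h := (S13.main n).2 k hk
    have he : (Matrix.of fun i j : Fin n =>
        ((2 * ((i : ℕ) + (j : ℕ) + k)).choose ((i : ℕ) + (j : ℕ) + k) : ℚ)) = S13.H k n := rfl
    rw [he, h]
    rfl
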